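/- Let c be the complex Banach space of convergent sequences with the supremum norm, and for each k ∈ ℕ let L_k ∈ c* be given by L_k((c_n)_n) = (lim_{n→∞} c_n - c_k)/2, so each L_k has norm at most one. Then for every finite rank bounded linear operator S : c → c, the norms ‖S*(L_k)‖ converge to 0 as k → ∞. -/

import Mathlib

open Metric Filter Topology

namespace ClusterValue

variable (X : Type*) [NormedAddCommGroup X] [NormedSpace ℂ X]

/-- Membership in `A_u(B)`: analytic on the open unit ball, bounded there,
and uniformly continuous there. -/
def MemAu (f : X → ℂ) : Prop :=
  AnalyticOn ℂ f (ball (0 : X) 1) ∧ (∃ C : ℝ, ∀ x ∈ ball (0 : X) 1, ‖f x‖ ≤ C) ∧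
    UniformContinuousOn f (ball (0 : X) 1)

/-- Membership in `H^∞(B)`: analytic on the open unit ball and bounded there. -/
def MemHinf (f : X → ℂ) : Prop :=
  AnalyticOn ℂ f (ball (0 : X) 1) ∧ (∃ C : ℝ, ∀ x ∈ ball (0 : X) 1, ‖f x‖ ≤ C)

/-- A character (nonzero continuous multiplicative linear functional) of the algebra
of functions on the open unit ball of `X` determined by the membership predicate `Mem`.
Functions are identified when they agree on the ball. -/
structure Character (Mem : (X → ℂ) → Prop) : Type _ where
  toFun : (X → ℂ) → ℂ
  congr' : ∀ f g, Mem f → Mem g → (∀ x ∈ ball (0 : X) 1, f x = g x) → toFun f = toFun g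
  map_add' : ∀ f g, Mem f → Mem g → toFun (f + g) = toFun f + toFun g
  map_mul' : ∀ f g, Mem f → Mem g → toFun (f * g) = toFun f * toFun g
  map_smul' : ∀ (c : ℂ) (f), Mem f → toFun (c • f) = c * toFun f
  map_one' : toFun 1 = 1
  continuous' : ∃ C : ℝ, ∀ (f : X → ℂ) (M : ℝ), Mem f →
    (∀ x ∈ ball (0 : X) 1, ‖f x‖ ≤ M) → ‖toFun f‖ ≤ C * M

variable {X}

/-- The fiber over `0`: characters annihilating all continuous linear functionals. -/
def Character.inFiberZero {Mem : (X → ℂ) → Prop} (τ : Character X Mem) : Prop :=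
  ∀ φ : X →L[ℂ] ℂ, τ.toFun ⇑φ = 0

/-- The fiber over `x'' ∈ X**`. -/
def Character.inFiber {Mem : (X → ℂ) → Prop} (τ : Character X Mem)
    (x'' : (X →L[ℂ] ℂ) →L[ℂ] ℂ) : Prop :=
  ∀ φ : X →L[ℂ] ℂ, τ.toFun ⇑φ = x'' φ

variable (X)

/-- The cluster set of `f` at `0`: limits of `f` along weakly null nets (filters) in the ball. -/
def clusterSetZero (f : X → ℂ) : Set ℂ :=
  {z | ∃ l : Filter X, l.NeBot ∧ l ≤ 𝓟 (ball (0 : X) 1) ∧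
    (∀ φ : X →L[ℂ] ℂ, Tendsto (fun x => φ x) l (𝓝 0)) ∧ Tendsto f l (𝓝 z)}

/-- The cluster set of `f` at `x'' ∈ X**`: limits of `f` along nets in the ball converging
weak-star to `x''`. -/
def clusterSet (f : X → ℂ) (x'' : (X →L[ℂ] ℂ) →L[ℂ] ℂ) : Set ℂ :=
  {z | ∃ l : Filter X, l.NeBot ∧ l ≤ 𝓟 (ball (0 : X) 1) ∧
    (∀ φ : X →L[ℂ] ℂ, Tendsto (fun x => φ x) l (𝓝 (x'' φ))) ∧ Tendsto f l (𝓝 z)}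

/-- A finite rank (bounded linear) operator. -/
def FiniteRank (S : X →L[ℂ] X) : Prop :=
  FiniteDimensional ℂ ↥(LinearMap.range (S : X →ₗ[ℂ] X))

/-- Finite type polynomials: the subalgebra of functions generated by the
continuous linear functionals (and constants). -/
def IsFiniteTypePoly (p : X → ℂ) : Prop :=
  p ∈ Algebra.adjoin ℂ (Set.range fun φ : X →L[ℂ] ℂ => (⇑φ : X → ℂ))

/-- Membership in `A(B)`: uniform limits on the ball of finite type polynomials. -/
def MemA (f : X → ℂ) : Prop :=
  ∀ ε > (0 : ℝ), ∃ p : X → ℂ, IsFiniteTypePoly X p ∧ ∀ x ∈ ball (0 : X) 1, ‖f x - p x‖ ≤ ε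

/-- A continuous polynomial: a finite sum of (diagonals of) continuous multilinear maps. -/
def IsContPoly (p : X → ℂ) : Prop :=
  ∃ (N : ℕ) (M : ∀ k : ℕ, ContinuousMultilinearMap ℂ (fun _ : Fin k => X) ℂ),
    ∀ x, p x = ∑ k ∈ Finset.range N, M k (fun _ => x)

end ClusterValue

namespace ClusterValue

open Filter Topology ENNReal

/-- The space `c` of convergent sequences, as a (closed) subspace of `ℓ∞`. -/
noncomputable def convSeq : Submodule ℂ (lp (fun _ : ℕ => ℂ) ∞) where
  carrier := {x | ∃ l : ℂ, Tendsto (fun n => x n) atTop (𝓝 l)}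
  add_mem' := by
    rintro x y ⟨l, hl⟩ ⟨m, hm⟩
    exact ⟨l + m, by simpa using hl.add hm⟩
  zero_mem' := ⟨0, by simp [tendsto_const_nhds]⟩
  smul_mem' := by
    rintro c x ⟨l, hl⟩
    refine ⟨c * l, ?_⟩
    simpa using (hl.const_mul c)

end ClusterValue

section Aux

variable {E : Type*} [NormedAddCommGroup E] [NormedSpace ℂ E]

lemma aux_finiteRank (L : ℕ → (E →L[ℂ] ℂ)) (S : E →L[ℂ] E)
    (hfd : FiniteDimensional ℂ ↥(LinearMap.range (S : E →ₗ[ℂ] E)))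
    (hzero : ∀ x : E, Tendsto (fun k => L k x) atTop (𝓝 0)) :
    Tendsto (fun k => ‖(L k).comp S‖) atTop (𝓝 0) := by
  haveI := hfd
  set R := LinearMap.range (S : E →ₗ[ℂ] E) with hR
  set n := Module.finrank ℂ ↥R with hn
  let b : Module.Basis (Fin n) ℂ ↥R := Module.finBasis ℂ ↥R
  have hmem : ∀ x, S x ∈ R := fun x => LinearMap.mem_range_self _ x
  let S' : E →L[ℂ] ↥R := S.codRestrict R hmem
  let f : Fin n → (E →L[ℂ] ℂ) := fun i =>
    (LinearMap.toContinuousLinearMap (b.coord i)).comp S'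
  have hrep : ∀ x, S x = ∑ i, (f i x) • ((b i : ↥R) : E) := by
    intro x
    have h1 : S' x = ∑ i, (b.coord i (S' x)) • b i := (b.sum_repr (S' x)).symm
    calc S x = ((S' x : ↥R) : E) := rfl
      _ = ((∑ i, (b.coord i (S' x)) • b i : ↥R) : E) := by rw [← h1]
      _ = ∑ i, (f i x) • ((b i : ↥R) : E) := by push_cast; rfl
  have hkey : ∀ k x, (L k).comp S x = ∑ i, (f i x) * L k ((b i : ↥R) : E) := by
    intro k x
    rw [ContinuousLinearMap.comp_apply, hrep x, map_sum]
    simp [smul_eq_mul]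
  have hub : ∀ k, ‖(L k).comp S‖ ≤ ∑ i, ‖f i‖ * ‖L k ((b i : ↥R) : E)‖ := by
    intro k
    refine ContinuousLinearMap.opNorm_le_bound _
      (Finset.sum_nonneg fun i _ => mul_nonneg (norm_nonneg _) (norm_nonneg _)) ?_
    intro x
    rw [hkey k x, Finset.sum_mul]
    refine (norm_sum_le _ _).trans (Finset.sum_le_sum fun i _ => ?_)
    rw [norm_mul]
    calc ‖f i x‖ * ‖L k ((b i : ↥R) : E)‖
        ≤ (‖f i‖ * ‖x‖) * ‖L k ((b i : ↥R) : E)‖ := by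
          gcongr; exact (f i).le_opNorm x
      _ = ‖f i‖ * ‖L k ((b i : ↥R) : E)‖ * ‖x‖ := by ring
  have hsum : Tendsto (fun k => ∑ i, ‖f i‖ * ‖L k ((b i : ↥R) : E)‖) atTop (𝓝 0) := by
    have h : Tendsto (fun k => ∑ i, ‖f i‖ * ‖L k ((b i : ↥R) : E)‖) atTop
        (𝓝 (∑ _i : Fin n, (0 : ℝ))) := by
      refine tendsto_finset_sum _ fun i _ => ?_
      have := ((hzero ((b i : ↥R) : E)).norm).const_mul ‖f i‖
      simpa using this
    simpa using h
  exact squeeze_zero (fun k => norm_nonneg _) hub hsum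

end Aux

set_option maxHeartbeats 1000000 in
set_option synthInstance.maxHeartbeats 400000 in
open Metric Filter Topology ENNReal ClusterValue in
/-- Let `L k ∈ c*` be given by `L k x = (lim x - x k) / 2`; each `L k` has norm at most one.
Then for every finite rank operator `S : c → c`, `‖S*(L k)‖ → 0` as `k → ∞`. -/
theorem statement7 (L : ℕ → (↥convSeq →L[ℂ] ℂ))
    (hL : ∀ (k : ℕ) (x : ↥convSeq) (l : ℂ),
      Tendsto (fun n => (x : lp (fun _ : ℕ => ℂ) ∞) n) atTop (𝓝 l) →
      L k x = (l - (x : lp (fun _ : ℕ => ℂ) ∞) k) / 2)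
    (S : ↥convSeq →L[ℂ] ↥convSeq) (hS : FiniteRank ↥convSeq S) :
    (∀ k, ‖L k‖ ≤ 1) ∧ Tendsto (fun k => ‖(L k).comp S‖) atTop (𝓝 0) := by
  have hbound : ∀ k, ‖L k‖ ≤ 1 := by
    intro k
    refine (L k).opNorm_le_bound zero_le_one ?_
    intro x
    obtain ⟨l, hl⟩ := x.2
    rw [hL k x l hl, one_mul]
    have h1 : ‖(x : lp (fun _ : ℕ => ℂ) ∞) k‖ ≤ ‖x‖ :=
      lp.norm_apply_le_norm ENNReal.top_ne_zero _ k
    have h2 : ‖l‖ ≤ ‖x‖ := by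
      have h3 := (hl.norm : Tendsto (fun n => ‖(x : lp (fun _ : ℕ => ℂ) ∞) n‖) atTop (𝓝 ‖l‖))
      exact le_of_tendsto h3 (Eventually.of_forall fun n =>
        lp.norm_apply_le_norm ENNReal.top_ne_zero _ n)
    calc ‖(l - (x : lp (fun _ : ℕ => ℂ) ∞) k) / 2‖
        = ‖l - (x : lp (fun _ : ℕ => ℂ) ∞) k‖ / 2 := by
          rw [norm_div]; norm_num
      _ ≤ (‖l‖ + ‖(x : lp (fun _ : ℕ => ℂ) ∞) k‖) / 2 := by
          gcongr; exact norm_sub_le _ _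
      _ ≤ (‖x‖ + ‖x‖) / 2 := by gcongr
      _ = ‖x‖ := by ring
  refine ⟨hbound, ?_⟩
  have hzero : ∀ x : ↥convSeq, Tendsto (fun k => L k x) atTop (𝓝 0) := by
    intro x
    obtain ⟨l, hl⟩ := x.2
    have heq : (fun k => L k x) = fun k => (l - (x : lp (fun _ : ℕ => ℂ) ∞) k) / 2 := by
      funext k; exact hL k x l hl
    rw [heq]
    have h4 : Tendsto (fun k => (l - (x : lp (fun _ : ℕ => ℂ) ∞) k) / 2) atTop (𝓝 ((l - l) / 2)) :=
      (tendsto_const_nhds.sub hl).div_const 2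
    simpa using h4
  exact aux_finiteRank L S hS hzero
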